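/- Fix n, N ≥ 1, Δ > 0, and L = log(2HSAT/δ) > 0. Define ε(λ) = sqrt(L(λ²/(2n) + (1−λ)²/(2N))) + Δ(1−λ). If n < L/(2Δ²), then the unique minimizer of ε over [0,1] is λ* = (n + NnΔ/sqrt((N+n)L/2 − Δ²Nn))/(N+n), and in particular 0 < λ* < 1 and ε(λ*) < ε(1) = sqrt(L/(2n)). -/

import Mathlib

lemma min_aux (a b Δ lst r l : ℝ) (ha : 0 < a) (hb : 0 < b)
    (hr : Real.sqrt (a*lst^2 + b*(1-lst)^2) = r) (hrpos : 0 < r)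
    (hfoc : a*lst - b*(1-lst) = Δ * r) :
    Real.sqrt (a*lst^2 + b*(1-lst)^2) + Δ*(1-lst)
      ≤ Real.sqrt (a*l^2 + b*(1-l)^2) + Δ*(1-l) ∧
    (l ≠ lst → Real.sqrt (a*lst^2 + b*(1-lst)^2) + Δ*(1-lst)
      < Real.sqrt (a*l^2 + b*(1-l)^2) + Δ*(1-l)) := by
  set I := a*l*lst + b*(1-l)*(1-lst) with hI
  have hQl : (0:ℝ) ≤ a*l^2 + b*(1-l)^2 := by positivity
  have hr2 : r^2 = a*lst^2 + b*(1-lst)^2 := by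
    rw [← hr, Real.sq_sqrt (by positivity)]
  have key : Real.sqrt (a*l^2 + b*(1-l)^2) * r
      = Real.sqrt (I^2 + a*b*(l-lst)^2) := by
    rw [show Real.sqrt (a*l^2+b*(1-l)^2) * r
        = Real.sqrt ((a*l^2+b*(1-l)^2) * r^2) from by
      rw [Real.sqrt_mul hQl, Real.sqrt_sq hrpos.le]]
    congr 1
    rw [hr2]; ring
  have bound : I ≤ Real.sqrt (I^2 + a*b*(l-lst)^2) := by
    refine le_trans (le_abs_self I) ?_
    rw [← Real.sqrt_sq_eq_abs]
    exact Real.sqrt_le_sqrt (by nlinarith [mul_nonneg (mul_nonneg ha.le hb.le) (sq_nonneg (l-lst))])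
  have expand : I = r^2 + Δ*r*(l-lst) := by
    linear_combination (-1) * hr2 + (l - lst) * hfoc
  have hge : I ≤ Real.sqrt (a*l^2 + b*(1-l)^2) * r := key ▸ bound
  rw [hr]
  constructor
  · nlinarith [hge, hrpos]
  · intro hne
    have hd : 0 < a*b*(l-lst)^2 := by
      have : (l-lst) ≠ 0 := sub_ne_zero.mpr hne
      positivity
    have strict : I < Real.sqrt (a*l^2 + b*(1-l)^2) * r := by
      rw [key]
      have h1 : |I| < Real.sqrt (I^2 + a*b*(l-lst)^2) := by
        rw [← Real.sqrt_sq_eq_abs]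
        exact Real.sqrt_lt_sqrt (sq_nonneg I) (by linarith)
      exact lt_of_le_of_lt (le_abs_self I) h1
    nlinarith [strict, hrpos]

theorem stmt_8 (n N : ℕ) (hn : 1 ≤ n) (hN : 1 ≤ N) (Δ L : ℝ) (hΔ : 0 < Δ) (hL : 0 < L)
    (hsmall : (n : ℝ) < L / (2 * Δ ^ 2)) :
    letI ε : ℝ → ℝ := fun l =>
      Real.sqrt (L * (l ^ 2 / (2 * n) + (1 - l) ^ 2 / (2 * N))) + Δ * (1 - l)
    letI lstar : ℝ :=
      ((n : ℝ) + (N : ℝ) * n * Δ /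
        Real.sqrt (((N : ℝ) + n) * L / 2 - Δ ^ 2 * N * n)) / ((N : ℝ) + n)
    0 < lstar ∧ lstar < 1 ∧
    (∀ l ∈ Set.Icc (0 : ℝ) 1, ε lstar ≤ ε l) ∧
    (∀ l ∈ Set.Icc (0 : ℝ) 1, ε l = ε lstar → l = lstar) ∧
    ε 1 = Real.sqrt (L / (2 * n)) ∧ ε lstar < ε 1 := by
  have hn' : (0:ℝ) < n := by exact_mod_cast hn
  have hN' : (0:ℝ) < N := by exact_mod_cast hN
  have hM : (0:ℝ) < (N:ℝ) + n := by linarith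
  have h2 : 2*Δ^2*(n:ℝ) < L := by
    have := (lt_div_iff₀ (by positivity : (0:ℝ) < 2*Δ^2)).mp hsmall
    nlinarith
  have hE : (0:ℝ) < ((N:ℝ)+n)*L/2 - Δ^2*N*n := by nlinarith
  set s : ℝ := Real.sqrt (((N:ℝ)+n)*L/2 - Δ^2*N*n) with hs_def
  have hspos : 0 < s := Real.sqrt_pos.mpr hE
  have hs2 : s^2 = ((N:ℝ)+n)*L/2 - Δ^2*N*n := Real.sq_sqrt hE.le
  have hnΔs : (n:ℝ)*Δ < s := by
    rw [hs_def]
    rw [show ((n:ℝ)*Δ) = Real.sqrt (((n:ℝ)*Δ)^2) from (Real.sqrt_sq (by positivity)).symm]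
    exact Real.sqrt_lt_sqrt (by positivity) (by nlinarith)
  set lstar : ℝ := ((n : ℝ) + (N : ℝ) * n * Δ / s) / ((N : ℝ) + n) with hlstar_def
  have hlstar_pos : 0 < lstar := by
    apply div_pos _ hM
    have : 0 < (N:ℝ)*n*Δ/s := by positivity
    linarith
  have hlstar_lt1 : lstar < 1 := by
    rw [hlstar_def, div_lt_one hM]
    have : (N:ℝ)*n*Δ/s < N := by
      rw [div_lt_iff₀ hspos]; nlinarith
    linarith
  -- key identities
  have hQstar : (L/(2*(n:ℝ)))*lstar^2 + (L/(2*(N:ℝ)))*(1-lstar)^2 = (L/(2*s))^2 := by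
    rw [hlstar_def]
    field_simp
    linear_combination (2*(N:ℝ)*((N:ℝ)+n)) * hs2
  have hr : Real.sqrt ((L/(2*(n:ℝ)))*lstar^2 + (L/(2*(N:ℝ)))*(1-lstar)^2) = L/(2*s) := by
    rw [hQstar, Real.sqrt_sq (by positivity)]
  have hfoc : (L/(2*(n:ℝ)))*lstar - (L/(2*(N:ℝ)))*(1-lstar) = Δ * (L/(2*s)) := by
    rw [hlstar_def]
    field_simp
    ring
  have ha : (0:ℝ) < L/(2*(n:ℝ)) := by positivity
  have hb : (0:ℝ) < L/(2*(N:ℝ)) := by positivity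
  have hrpos : (0:ℝ) < L/(2*s) := by positivity
  have hform : ∀ l : ℝ, L * (l ^ 2 / (2 * (n:ℝ)) + (1 - l) ^ 2 / (2 * (N:ℝ)))
      = (L/(2*(n:ℝ)))*l^2 + (L/(2*(N:ℝ)))*(1-l)^2 := fun l => by ring
  have main := fun l => min_aux (L/(2*(n:ℝ))) (L/(2*(N:ℝ))) Δ lstar (L/(2*s)) l ha hb hr hrpos hfoc
  refine ⟨hlstar_pos, hlstar_lt1, ?_, ?_, ?_, ?_⟩
  · intro l _
    simpa only [hform] using (main l).1
  · intro l _ heq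
    by_contra hne
    have := (main l).2 hne
    simp only [hform] at heq
    linarith
  · have : L * ((1:ℝ) ^ 2 / (2 * (n:ℝ)) + (1 - 1) ^ 2 / (2 * (N:ℝ))) = L / (2*(n:ℝ)) := by
      field_simp
      ring
    simp only [this]
    norm_num
  · have h1 : (1:ℝ) ≠ lstar := by intro h; rw [← h] at hlstar_lt1; linarith
    have := (main 1).2 h1
    simp only [hform]
    linarith
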